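/- Let G be a simple graph on n vertices, θ ∈ ℝ^n a second-order stationary point of the Kuramoto energy E_G, and W = Q ⊎ P disjoint vertex subsets with Q nonempty such that every i ∈ Q is adjacent to every vertex of P and N(i) \ P ⊆ Q for all i ∈ Q, and all phasors of Q equal a common unit vector v (v_i = v for all i ∈ Q, where v_k = (cos θ_k, sin θ_k)). Then any two adjacent vertices a, b ∈ Q are geometric closed twins with respect to q = Σ_{j ∈ (P ∪ Q) \ {a,b}, j ∈ N(a)} v_j in the stable sense: v_b + Σ_{i ∈ P} v_i is a nonnegative multiple of v_a or zero, and v_a + Σ_{i ∈ P} v_i is a nonnegative multiple of v_b or zero. -/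

import Mathlib

open Finset

/-- The phasor of vertex `i` at state `θ`: the unit vector `(cos θᵢ, sin θᵢ) ∈ ℝ²`. -/
noncomputable def phasor {V : Type*} (θ : V → ℝ) (i : V) : ℝ × ℝ :=
  (Real.cos (θ i), Real.sin (θ i))

/-- The Kuramoto energy `E_G(θ) = (1/2)·Σ_{i,j} A_{ij}(1 − cos(θ_i − θ_j))`. -/
noncomputable def kuramotoEnergy {V : Type*} [Fintype V] (G : SimpleGraph V)
    [DecidableRel G.Adj] (θ : V → ℝ) : ℝ :=
  (1 / 2) * ∑ i, ∑ j, (if G.Adj i j then (1 : ℝ) else 0) * (1 - Real.cos (θ i - θ j))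

/-- The Hessian of the Kuramoto energy at `θ`: off-diagonal entries
`−A_{ij} cos(θ_i − θ_j)` and diagonal entries `Σ_{k ≠ i} A_{ik} cos(θ_i − θ_k)`. -/
noncomputable def kuramotoHessian {V : Type*} [Fintype V] [DecidableEq V] (G : SimpleGraph V)
    [DecidableRel G.Adj] (θ : V → ℝ) : Matrix V V ℝ :=
  Matrix.of fun i j =>
    if i = j then ∑ k ∈ Finset.univ.erase i, (if G.Adj i k then Real.cos (θ i - θ k) else 0)
    else -(if G.Adj i j then Real.cos (θ i - θ j) else 0)

/-- `θ` is a second-order stationary point of the Kuramoto energy: the gradient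
`(∇E_G(θ))_i = Σ_j A_{ij} sin(θ_i − θ_j)` vanishes and the Hessian is positive
semidefinite. -/
def IsSOSP {V : Type*} [Fintype V] [DecidableEq V] (G : SimpleGraph V)
    [DecidableRel G.Adj] (θ : V → ℝ) : Prop :=
  (∀ i, ∑ j, (if G.Adj i j then (1 : ℝ) else 0) * Real.sin (θ i - θ j) = 0) ∧
  (kuramotoHessian G θ).PosSemidef

/-- At a second-order stationary point `θ`, given disjoint subsets `Q` (nonempty) and `P`
with every `i ∈ Q` adjacent to all of `P` and `N(i) \ P ⊆ Q`, and all phasors of `Q`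
equal to a common unit vector `v`, any two adjacent vertices `a, b ∈ Q` are geometric
closed twins in the stable sense: `v_b + Σ_{i ∈ P} v_i` is a nonnegative multiple of
`v_a` (possibly zero), and `v_a + Σ_{i ∈ P} v_i` is a nonnegative multiple of `v_b`. -/
theorem stmt_15 {n : ℕ} (G : SimpleGraph (Fin n)) [DecidableRel G.Adj] (θ : Fin n → ℝ)
    (hθ : IsSOSP G θ)
    (Q P : Finset (Fin n)) (hdisj : Disjoint Q P) (hQ : Q.Nonempty)
    (hQP : ∀ i ∈ Q, ∀ p ∈ P, G.Adj i p)
    (hQQ : ∀ i ∈ Q, G.neighborFinset i \ P ⊆ Q)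
    (v : ℝ × ℝ) (hv : v.1 ^ 2 + v.2 ^ 2 = 1)
    (hsync : ∀ i ∈ Q, phasor θ i = v)
    (a b : Fin n) (ha : a ∈ Q) (hb : b ∈ Q) (hab : G.Adj a b) :
    (∃ lam : ℝ, 0 ≤ lam ∧ phasor θ b + ∑ i ∈ P, phasor θ i = lam • phasor θ a) ∧
    (∃ lam : ℝ, 0 ≤ lam ∧ phasor θ a + ∑ i ∈ P, phasor θ i = lam • phasor θ b) := by
  obtain ⟨hgrad, hpsd⟩ := hθ
  have hva : phasor θ a = v := hsync a ha
  have hvb : phasor θ b = v := hsync b hb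
  have hca : Real.cos (θ a) = v.1 := congrArg Prod.fst hva
  have hsa : Real.sin (θ a) = v.2 := congrArg Prod.snd hva
  set S1 := ∑ p ∈ P, Real.cos (θ p) with hS1
  set S2 := ∑ p ∈ P, Real.sin (θ p) with hS2
  -- stationarity at a gives the cross-product relation
  have hcross : v.2 * S1 - v.1 * S2 = 0 := by
    have h0 := hgrad a
    have hsub : ∑ p ∈ P, (if G.Adj a p then (1:ℝ) else 0) * Real.sin (θ a - θ p)
        = ∑ j, (if G.Adj a j then (1:ℝ) else 0) * Real.sin (θ a - θ j) := by
      apply Finset.sum_subset (Finset.subset_univ P)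
      intro j _ hjP
      by_cases hadj : G.Adj a j
      · have hjQ : j ∈ Q := hQQ a ha (by
          simp [Finset.mem_sdiff, SimpleGraph.mem_neighborFinset, hadj, hjP])
        have hj := hsync j hjQ
        have hcj : Real.cos (θ j) = v.1 := congrArg Prod.fst hj
        have hsj : Real.sin (θ j) = v.2 := congrArg Prod.snd hj
        rw [if_pos hadj, one_mul, Real.sin_sub, hca, hsa, hcj, hsj]; ring
      · rw [if_neg hadj, zero_mul]
    have h1 : ∑ p ∈ P, (if G.Adj a p then (1:ℝ) else 0) * Real.sin (θ a - θ p)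
        = v.2 * S1 - v.1 * S2 := by
      rw [hS1, hS2, Finset.mul_sum, Finset.mul_sum, ← Finset.sum_sub_distrib]
      refine Finset.sum_congr rfl fun p hp => ?_
      rw [if_pos (hQP a ha p hp), one_mul, Real.sin_sub, hca, hsa]
    rw [← hsub, h1] at h0
    exact h0
  -- row sums of the Hessian over Q
  have hrow : ∀ i ∈ Q, ∑ j ∈ Q, kuramotoHessian G θ i j = ∑ p ∈ P, Real.cos (θ i - θ p) := by
    intro i hi
    have hiP : i ∉ P := fun h => Finset.disjoint_left.mp hdisj hi h
    have hdisj2 : Disjoint (Q.erase i) P :=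
      Finset.disjoint_of_subset_left (Finset.erase_subset i Q) hdisj
    have hdiag : kuramotoHessian G θ i i
        = ∑ k ∈ Finset.univ.erase i, (if G.Adj i k then Real.cos (θ i - θ k) else 0) := by
      simp [kuramotoHessian]
    have hsplit : ∑ k ∈ Finset.univ.erase i, (if G.Adj i k then Real.cos (θ i - θ k) else 0)
        = ∑ k ∈ Q.erase i ∪ P, (if G.Adj i k then Real.cos (θ i - θ k) else 0) := by
      symm
      apply Finset.sum_subset
      · intro k hk
        rcases Finset.mem_union.mp hk with h | h
        · exact Finset.mem_erase.mpr ⟨(Finset.mem_erase.mp h).1, Finset.mem_univ k⟩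
        · exact Finset.mem_erase.mpr ⟨fun he => hiP (he ▸ h), Finset.mem_univ k⟩
      · intro k hk hk2
        by_cases hadj : G.Adj i k
        · exfalso
          have hkP : k ∉ P := fun h => hk2 (Finset.mem_union_right _ h)
          have hkQ : k ∈ Q := hQQ i hi (by
            simp [Finset.mem_sdiff, SimpleGraph.mem_neighborFinset, hadj, hkP])
          exact hk2 (Finset.mem_union_left _
            (Finset.mem_erase.mpr ⟨(Finset.mem_erase.mp hk).1, hkQ⟩))
        · rw [if_neg hadj]
    have hP : ∑ k ∈ P, (if G.Adj i k then Real.cos (θ i - θ k) else 0)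
        = ∑ p ∈ P, Real.cos (θ i - θ p) :=
      Finset.sum_congr rfl fun p hp => if_pos (hQP i hi p hp)
    calc ∑ j ∈ Q, kuramotoHessian G θ i j
        = kuramotoHessian G θ i i + ∑ j ∈ Q.erase i, kuramotoHessian G θ i j := by
          rw [← Finset.sum_insert (Finset.notMem_erase i Q), Finset.insert_erase hi]
      _ = (∑ k ∈ Q.erase i, (if G.Adj i k then Real.cos (θ i - θ k) else 0)
            + ∑ p ∈ P, Real.cos (θ i - θ p))
          + ∑ j ∈ Q.erase i, -(if G.Adj i j then Real.cos (θ i - θ j) else 0) := by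
          rw [hdiag, hsplit, Finset.sum_union hdisj2, hP]
          congr 1
          refine Finset.sum_congr rfl fun j hj => ?_
          have hji : i ≠ j := fun he => (Finset.mem_erase.mp hj).1 he.symm
          simp [kuramotoHessian, hji]
      _ = ∑ p ∈ P, Real.cos (θ i - θ p) := by
          rw [Finset.sum_neg_distrib]; ring
  -- the quadratic form at the indicator of Q
  have hq : (0:ℝ) ≤ (Q.card : ℝ) * (v.1 * S1 + v.2 * S2) := by
    have hquad := hpsd.dotProduct_mulVec_nonneg (fun i : Fin n => if i ∈ Q then (1:ℝ) else 0)
    have hform : dotProduct (star (fun i : Fin n => if i ∈ Q then (1:ℝ) else 0))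
        (Matrix.mulVec (kuramotoHessian G θ) (fun i : Fin n => if i ∈ Q then (1:ℝ) else 0))
        = ∑ i ∈ Q, ∑ j ∈ Q, kuramotoHessian G θ i j := by
      simp [dotProduct, Matrix.mulVec, mul_ite, mul_one, mul_zero, ite_mul, one_mul,
        zero_mul, Finset.sum_ite_mem, Finset.univ_inter]
    rw [hform] at hquad
    have hval : ∑ i ∈ Q, ∑ j ∈ Q, kuramotoHessian G θ i j
        = (Q.card : ℝ) * (v.1 * S1 + v.2 * S2) := by
      rw [Finset.sum_congr rfl hrow]
      have : ∀ i ∈ Q, ∑ p ∈ P, Real.cos (θ i - θ p) = v.1 * S1 + v.2 * S2 := by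
        intro i hi
        have hi' := hsync i hi
        have hci : Real.cos (θ i) = v.1 := congrArg Prod.fst hi'
        have hsi : Real.sin (θ i) = v.2 := congrArg Prod.snd hi'
        rw [hS1, hS2, Finset.mul_sum, Finset.mul_sum, ← Finset.sum_add_distrib]
        refine Finset.sum_congr rfl fun p hp => ?_
        rw [Real.cos_sub, hci, hsi]
      rw [Finset.sum_congr rfl this, Finset.sum_const, nsmul_eq_mul]
    rw [hval] at hquad
    exact hquad
  have hcard : (0:ℝ) < (Q.card : ℝ) := by
    exact_mod_cast Finset.card_pos.mpr hQ
  have hmu : 0 ≤ v.1 * S1 + v.2 * S2 := nonneg_of_mul_nonneg_right hq hcard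
  -- conclude
  have hsum1 : (∑ i ∈ P, phasor θ i).1 = S1 := by
    rw [Prod.fst_sum]; rfl
  have hsum2 : (∑ i ∈ P, phasor θ i).2 = S2 := by
    rw [Prod.snd_sum]; rfl
  have key : ∀ x y : ℝ × ℝ, x = v → y = v →
      ∃ lam : ℝ, 0 ≤ lam ∧ x + ∑ i ∈ P, phasor θ i = lam • y := by
    rintro x y rfl' rfl''
    refine ⟨1 + (v.1 * S1 + v.2 * S2), by linarith, ?_⟩
    apply Prod.ext
    · rw [Prod.fst_add, hsum1, Prod.smul_fst, smul_eq_mul, rfl', rfl'']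
      linear_combination (-S1) * hv + v.2 * hcross
    · rw [Prod.snd_add, hsum2, Prod.smul_snd, smul_eq_mul, rfl', rfl'']
      linear_combination (-S2) * hv + (-v.1) * hcross
  exact ⟨key _ _ hvb hva, key _ _ hva hvb⟩
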